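/- For all 0 < a < 1 and τ > max{3, 1/(1−a)} there exists δ ≥ 0 depending only on a and τ such that for every metric space Z and every choice of hyperbolic filling data for Z with parameters a, τ, the graph on the vertex set V is connected and its graph metric satisfies the hyperbolicity inequality: for all vertices o, x, y, z, (x|z)_o ≥ min{(x|y)_o, (y|z)_o} − δ, where (x|y)_o = (|xo| + |yo| − |xy|)/2 is the Gromov product formed with graph distances. -/

import Mathlib

open Filter

/-- Hyperbolic filling data for a metric space `Z` with parameter `a`: a choice, for
each `n : ℤ`, of a maximal `a^n`-separated subset `S n` of `Z`. -/
structure HypFilling (Z : Type*) [MetricSpace Z] (a : ℝ) where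
  S : ℤ → Set Z
  separated : ∀ n : ℤ, ∀ x ∈ S n, ∀ y ∈ S n, x ≠ y → a ^ n ≤ dist x y
  maximal : ∀ (n : ℤ) (z : Z), ∃ x ∈ S n, dist z x < a ^ n

namespace HypFilling

variable {Z : Type*} [MetricSpace Z] {a : ℝ}

/-- The vertex set of the hyperbolic filling. -/
def Vertex (F : HypFilling Z a) : Type _ := {p : Z × ℤ // p.1 ∈ F.S p.2}

/-- The height of a vertex. -/
def height {F : HypFilling Z a} (v : F.Vertex) : ℤ := v.1.2

/-- The underlying point in `Z` of a vertex. -/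
def pt {F : HypFilling Z a} (v : F.Vertex) : Z := v.1.1

/-- Adjacency in the hyperbolic filling graph with dilation parameter `τ`: distinct
vertices of heights differing by at most `1` whose associated dilated balls meet. -/
def Adj {F : HypFilling Z a} (τ : ℝ) (v w : F.Vertex) : Prop :=
  v ≠ w ∧ |height v - height w| ≤ 1 ∧
    ∃ z : Z, dist z (pt v) < τ * a ^ height v ∧ dist z (pt w) < τ * a ^ height w

/-- `f 0, f 1, …, f k` is a walk in the filling graph. -/
def IsWalk {F : HypFilling Z a} (τ : ℝ) (k : ℕ) (f : ℕ → F.Vertex) : Prop :=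
  ∀ i < k, Adj τ (f i) (f (i + 1))

/-- Two vertices are joined by a walk. -/
def Joined {F : HypFilling Z a} (τ : ℝ) (v w : F.Vertex) : Prop :=
  ∃ (k : ℕ) (f : ℕ → F.Vertex), f 0 = v ∧ f k = w ∧ IsWalk τ k f

/-- The graph distance: the minimal number of edges of a walk joining `v` to `w`. -/
noncomputable def graphDist {F : HypFilling Z a} (τ : ℝ) (v w : F.Vertex) : ℕ :=
  sInf {k : ℕ | ∃ f : ℕ → F.Vertex, f 0 = v ∧ f k = w ∧ IsWalk τ k f}

/-- The Gromov product `(v|w)_h` formed with heights and graph distances. -/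
noncomputable def gpH {F : HypFilling Z a} (τ : ℝ) (v w : F.Vertex) : ℝ :=
  ((height v : ℝ) + (height w : ℝ) - (graphDist τ v w : ℝ)) / 2

/-- An ascending vertical walk from `u` to `v`. -/
def VertWalkUp {F : HypFilling Z a} (τ : ℝ) (u v : F.Vertex) : Prop :=
  ∃ (k : ℕ) (f : ℕ → F.Vertex), f 0 = u ∧ f k = v ∧
    ∀ i < k, Adj τ (f i) (f (i + 1)) ∧ height (f (i + 1)) = height (f i) + 1

/-- A cone point for the pair `{v, w}`: a vertex joined to each of `v` and `w` by a
vertical walk, of height at most `min (height v) (height w)`. -/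
def ConePoint {F : HypFilling Z a} (τ : ℝ) (u v w : F.Vertex) : Prop :=
  VertWalkUp τ u v ∧ VertWalkUp τ u w ∧ height u ≤ min (height v) (height w)

/-- A branch point for the pair `{v, w}`: a cone point of maximal height. -/
def BranchPoint {F : HypFilling Z a} (τ : ℝ) (u v w : F.Vertex) : Prop :=
  ConePoint τ u v w ∧ ∀ u' : F.Vertex, ConePoint τ u' v w → height u' ≤ height u

end HypFilling

/-- The Gromov product `(x|y)_o` formed with graph distances in the filling graph. -/
noncomputable def HypFilling.gpGraph {Z : Type*} [MetricSpace Z] {a : ℝ}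
    {F : HypFilling Z a} (τ : ℝ) (o x y : F.Vertex) : ℝ :=
  ((HypFilling.graphDist τ x o : ℝ) + (HypFilling.graphDist τ y o : ℝ) -
    (HypFilling.graphDist τ x y : ℝ)) / 2

namespace HypAux

open HypFilling Real
open scoped Classical

variable {Z : Type*} [MetricSpace Z] {a τ : ℝ} {F : HypFilling Z a}

lemma ne_of_height {v w : F.Vertex} (h : height v ≠ height w) : v ≠ w :=
  fun he => h (by rw [he])

lemma adj_symm {v w : F.Vertex} (h : Adj τ v w) : Adj τ w v :=
  ⟨h.1.symm, by rw [abs_sub_comm]; exact h.2.1,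
    let ⟨z, hz⟩ := h.2.2; ⟨z, hz.2, hz.1⟩⟩

/-- `v` and `w` are joined by a walk of length at most `k`. -/
def JoinedLe (τ : ℝ) (v w : F.Vertex) (k : ℕ) : Prop :=
  ∃ j ≤ k, ∃ f : ℕ → F.Vertex, f 0 = v ∧ f j = w ∧ IsWalk τ j f

lemma JoinedLe.refl (v : F.Vertex) (k : ℕ) : JoinedLe τ v v k :=
  ⟨0, Nat.zero_le _, fun _ => v, rfl, rfl, fun i hi => absurd hi (Nat.not_lt_zero i)⟩

lemma JoinedLe.ofEq {v w : F.Vertex} (h : v = w) (k : ℕ) : JoinedLe τ v w k :=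
  h ▸ JoinedLe.refl v k

lemma JoinedLe.mono {v w : F.Vertex} {k k' : ℕ} (h : JoinedLe τ v w k) (hk : k ≤ k') :
    JoinedLe τ v w k' := by
  obtain ⟨j, hj, f, hf⟩ := h
  exact ⟨j, le_trans hj hk, f, hf⟩

lemma JoinedLe.single {v w : F.Vertex} (h : Adj τ v w) : JoinedLe τ v w 1 := by
  refine ⟨1, le_refl _, fun i => if i = 0 then v else w, by simp, by simp, ?_⟩
  intro i hi
  have : i = 0 := by omega
  subst this
  simpa using h

lemma JoinedLe.trans {v w u : F.Vertex} {k1 k2 : ℕ}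
    (h1 : JoinedLe τ v w k1) (h2 : JoinedLe τ w u k2) : JoinedLe τ v u (k1 + k2) := by
  obtain ⟨j1, hj1, f1, hf10, hf1j, hw1⟩ := h1
  obtain ⟨j2, hj2, f2, hf20, hf2j, hw2⟩ := h2
  refine ⟨j1 + j2, by omega, fun i => if i < j1 then f1 i else f2 (i - j1), ?_, ?_, ?_⟩
  · by_cases h : 0 < j1
    · simp [h, hf10]
    · have hj0 : j1 = 0 := by omega
      simp only [h, if_false]
      rw [Nat.zero_sub, hf20, ← hf1j, hj0, hf10]
  · have : ¬ (j1 + j2 < j1) := by omega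
    simp only [this, if_false]
    rw [Nat.add_sub_cancel_left, hf2j]
  · intro i hi
    rcases lt_trichotomy (i + 1) j1 with h | h | h
    · have hi1 : i < j1 := by omega
      simp only [hi1, h, if_true]
      exact hw1 i hi1
    · have hi1 : i < j1 := by omega
      have : ¬ (i + 1 < j1) := by omega
      simp only [hi1, this, if_true, if_false]
      have : i + 1 - j1 = 0 := by omega
      rw [this, hf20, ← hf1j, ← h]
      exact hw1 i hi1
    · have hi1 : ¬ (i < j1) := by omega
      have hi2 : ¬ (i + 1 < j1) := by omega
      simp only [hi1, hi2, if_false]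
      have e : i + 1 - j1 = (i - j1) + 1 := by omega
      rw [e]
      exact hw2 (i - j1) (by omega)

lemma JoinedLe.symm {v w : F.Vertex} {k : ℕ} (h : JoinedLe τ v w k) : JoinedLe τ w v k := by
  obtain ⟨j, hj, f, hf0, hfj, hwk⟩ := h
  refine ⟨j, hj, fun i => f (j - i), by simp [hfj], by simp [hf0], ?_⟩
  intro i hi
  have e1 : j - i = (j - (i + 1)) + 1 := by omega
  have := hwk (j - (i + 1)) (by omega)
  rw [← e1] at this
  exact adj_symm this

lemma graphDist_le_of_joinedLe {v w : F.Vertex} {k : ℕ} (h : JoinedLe τ v w k) :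
    graphDist τ v w ≤ k := by
  obtain ⟨j, hj, f, hf⟩ := h
  exact le_trans (Nat.sInf_le ⟨f, hf⟩) hj

lemma joined_of_joinedLe {v w : F.Vertex} {k : ℕ} (h : JoinedLe τ v w k) : Joined τ v w := by
  obtain ⟨j, _, f, hf⟩ := h
  exact ⟨j, f, hf⟩


/-- A vertex of `S n` within `a ^ n` of `z`. -/
noncomputable def nearV (F : HypFilling Z a) (z : Z) (n : ℤ) : F.Vertex :=
  ⟨((F.maximal n z).choose, n), ((F.maximal n z).choose_spec).1⟩

lemma dist_nearV (F : HypFilling Z a) (z : Z) (n : ℤ) :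
    dist z (pt (nearV F z n)) < a ^ n := (F.maximal n z).choose_spec.2

lemma height_nearV (F : HypFilling Z a) (z : Z) (n : ℤ) : height (nearV F z n) = n := rfl

/-- Descending sequence of vertices below `v`. -/
noncomputable def desc (v : F.Vertex) : ℕ → F.Vertex
  | 0 => v
  | i + 1 => nearV F (pt v) (height v - (i + 1))

lemma height_desc (v : F.Vertex) (i : ℕ) : height (desc v i) = height v - i := by
  cases i with
  | zero => simp [desc]
  | succ i => rw [desc, height_nearV]; push_cast; ring

lemma dist_desc (ha0 : 0 < a) (v : F.Vertex) (i : ℕ) :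
    dist (pt v) (pt (desc v i)) ≤ a ^ (height v - (i : ℤ)) := by
  cases i with
  | zero => simp [desc, (zpow_pos ha0 _).le]
  | succ i =>
      rw [desc]
      have := (dist_nearV F (pt v) (height v - ((i : ℤ) + 1))).le
      exact_mod_cast this

lemma adj_desc (ha0 : 0 < a) (hτ1 : 1 < τ) (v : F.Vertex) (i : ℕ) :
    Adj τ (desc v i) (desc v (i + 1)) := by
  have k1 := height_desc v i
  have k2 := height_desc v (i + 1)
  refine ⟨ne_of_height (by rw [k1, k2]; push_cast; omega), ?_, ?_⟩
  · have : height (desc v i) - height (desc v (i+1)) = 1 := by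
      rw [k1, k2]; push_cast; ring
    rw [this]; norm_num
  · refine ⟨pt v, ?_, ?_⟩
    · calc dist (pt v) (pt (desc v i)) ≤ a ^ (height v - (i:ℤ)) := dist_desc ha0 v i
        _ = 1 * a ^ (height (desc v i)) := by rw [k1, one_mul]
        _ < τ * a ^ (height (desc v i)) := by
            have := zpow_pos ha0 (height (desc v i)); nlinarith
    · calc dist (pt v) (pt (desc v (i+1))) ≤ a ^ (height v - ((i+1:ℕ):ℤ)) := dist_desc ha0 v (i+1)
        _ = 1 * a ^ (height (desc v (i+1))) := by rw [k2, one_mul]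
        _ < τ * a ^ (height (desc v (i+1))) := by
            have := zpow_pos ha0 (height (desc v (i+1))); nlinarith

lemma joinedLe_desc (ha0 : 0 < a) (hτ1 : 1 < τ) (v : F.Vertex) (i : ℕ) :
    JoinedLe τ v (desc v i) i := by
  induction i with
  | zero => exact JoinedLe.ofEq rfl 0
  | succ i ih => exact ih.trans (JoinedLe.single (adj_desc ha0 hτ1 v i))

lemma joinedLe_connect (ha0 : 0 < a) (hτ : 3 < τ) {v w : F.Vertex}
    {m : ℤ} (hmv : m ≤ height v) (hmw : m ≤ height w)
    (hd : dist (pt v) (pt w) ≤ a ^ m) :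
    JoinedLe τ v w ((height v - m).toNat + (height w - m).toNat + 1) := by
  have hτ1 : 1 < τ := by linarith
  set k1 := (height v - m).toNat with hk1
  set k2 := (height w - m).toNat with hk2
  have hc1 : height v - (k1 : ℤ) = m := by rw [hk1]; omega
  have hc2 : height w - (k2 : ℤ) = m := by rw [hk2]; omega
  have hh1 : height (desc v k1) = m := by rw [height_desc, hc1]
  have hh2 : height (desc w k2) = m := by rw [height_desc, hc2]
  have hd1 : dist (pt v) (pt (desc v k1)) ≤ a ^ m := by
    have := dist_desc ha0 v k1; rwa [hc1] at this
  have hd2 : dist (pt w) (pt (desc w k2)) ≤ a ^ m := by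
    have := dist_desc ha0 w k2; rwa [hc2] at this
  have h1 : JoinedLe τ v (desc v k1) k1 := joinedLe_desc ha0 hτ1 v k1
  have h2 : JoinedLe τ (desc w k2) w k2 := (joinedLe_desc ha0 hτ1 w k2).symm
  have hmid : JoinedLe τ (desc v k1) (desc w k2) 1 := by
    by_cases he : desc v k1 = desc w k2
    · exact JoinedLe.ofEq he 1
    · refine JoinedLe.single ⟨he, by rw [hh1, hh2]; simp, pt v, ?_, ?_⟩
      · rw [hh1]
        have := zpow_pos ha0 m
        nlinarith
      · rw [hh2]
        have h3 := dist_triangle (pt v) (pt w) (pt (desc w k2))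
        have := zpow_pos ha0 m
        nlinarith
  have := (h1.trans hmid).trans h2
  exact this.mono (by omega)

/-- The key quantity controlling distances: `min (min h(v) h(w)) (log_a d(v,w))`. -/
noncomputable def rho (v w : F.Vertex) : ℝ :=
  min (↑(min (height v) (height w)))
    (if pt v = pt w then (↑(min (height v) (height w)) : ℝ)
     else Real.log (dist (pt v) (pt w)) / Real.log a)

lemma rho_le_fst (v w : F.Vertex) : rho v w ≤ (height v : ℝ) :=
  le_trans (min_le_left _ _) (by exact_mod_cast min_le_left _ _)

lemma rho_le_snd (v w : F.Vertex) : rho v w ≤ (height w : ℝ) :=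
  le_trans (min_le_left _ _) (by exact_mod_cast min_le_right _ _)

lemma rho_le_log (v w : F.Vertex) (h : pt v ≠ pt w) :
    rho v w ≤ Real.log (dist (pt v) (pt w)) / Real.log a := by
  refine le_trans (min_le_right _ _) ?_
  rw [if_neg h]

lemma rho_symm (v w : F.Vertex) : rho v w = rho w v := by
  unfold rho
  rw [min_comm (height v) (height w), dist_comm (pt v) (pt w)]
  exact congrArg (min _) (if_congr eq_comm rfl rfl)


lemma joined_and_le (ha0 : 0 < a) (ha1 : a < 1) (hτ : 3 < τ) (v w : F.Vertex) :
    Joined τ v w ∧ (graphDist τ v w : ℝ) ≤ (height v : ℝ) + height w - 2 * rho v w + 3 := by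
  have hla : Real.log a < 0 := Real.log_neg ha0 ha1
  set m : ℤ := ⌊rho v w⌋ with hm
  have hmle : (m : ℝ) ≤ rho v w := Int.floor_le _
  have hmgt : rho v w - 1 < (m : ℝ) := Int.sub_one_lt_floor _
  have hmv : m ≤ height v := by
    have : (m : ℝ) ≤ (height v : ℝ) := le_trans hmle (rho_le_fst v w)
    exact_mod_cast this
  have hmw : m ≤ height w := by
    have : (m : ℝ) ≤ (height w : ℝ) := le_trans hmle (rho_le_snd v w)
    exact_mod_cast this
  have hd : dist (pt v) (pt w) ≤ a ^ m := by
    by_cases hp : pt v = pt w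
    · rw [dist_eq_zero.mpr hp]
      exact (zpow_pos ha0 m).le
    · have hd0 : 0 < dist (pt v) (pt w) := dist_pos.mpr hp
      have hL : (m : ℝ) ≤ Real.log (dist (pt v) (pt w)) / Real.log a :=
        le_trans hmle (rho_le_log v w hp)
      have h1 : Real.log (dist (pt v) (pt w)) ≤ (m : ℝ) * Real.log a :=
        (le_div_iff_of_neg hla).mp hL
      calc dist (pt v) (pt w) = Real.exp (Real.log (dist (pt v) (pt w))) :=
            (Real.exp_log hd0).symm
        _ ≤ Real.exp ((m : ℝ) * Real.log a) := Real.exp_le_exp.mpr h1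
        _ = a ^ ((m : ℤ) : ℝ) := by rw [Real.rpow_def_of_pos ha0, mul_comm]
        _ = a ^ m := Real.rpow_intCast a m
  have hJ := joinedLe_connect ha0 hτ hmv hmw hd
  refine ⟨joined_of_joinedLe hJ, ?_⟩
  have hle := graphDist_le_of_joinedLe hJ
  have e1 : ((height v - m).toNat : ℤ) = height v - m := Int.toNat_of_nonneg (by omega)
  have e2 : ((height w - m).toNat : ℤ) = height w - m := Int.toNat_of_nonneg (by omega)
  have r1 : (((height v - m).toNat : ℕ) : ℝ) = (height v : ℝ) - (m : ℝ) := by exact_mod_cast e1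
  have r2 : (((height w - m).toNat : ℕ) : ℝ) = (height w : ℝ) - (m : ℝ) := by exact_mod_cast e2
  have hcast : (((height v - m).toNat + (height w - m).toNat + 1 : ℕ) : ℝ)
      = ((height v : ℝ) - m) + ((height w : ℝ) - m) + 1 := by
    push_cast [r1, r2]
    ring
  have : (graphDist τ v w : ℝ) ≤ (((height v - m).toNat + (height w - m).toNat + 1 : ℕ) : ℝ) := by
    exact_mod_cast hle
  rw [hcast] at this
  linarith

lemma walk_height {k : ℕ} {f : ℕ → F.Vertex} (hf : IsWalk τ k f) :
    ∀ i ≤ k, |height (f 0) - height (f i)| ≤ (i : ℤ) := by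
  intro i
  induction i with
  | zero => intro _; simp
  | succ i ih =>
      intro hik
      have h1 := ih (by omega)
      have h2 := (hf i (by omega)).2.1
      have h3 := abs_sub_le (height (f 0)) (height (f i)) (height (f (i + 1)))
      push_cast
      linarith

lemma walk_dist (ha0 : 0 < a) (ha1 : a < 1) (hτ : 3 < τ) {C D : ℝ}
    (hD : D * (1 - a) = 2 * τ)
    (hCq : 2 * τ ≤ C * (1 - Real.sqrt a))
    (hCa : 4 * τ ≤ C * (1 - a))
    (hCD : D ≤ C) :
    ∀ (k : ℕ) (f : ℕ → F.Vertex), IsWalk τ k f →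
      dist (pt (f 0)) (pt (f k)) ≤
        C * Real.sqrt a ^ ((height (f 0) : ℝ) + (height (f k) : ℝ) - (k : ℝ))
          - D * Real.sqrt a ^ (2 * (height (f k) : ℝ)) := by
  have hτ0 : (0:ℝ) < τ := by linarith
  set q := Real.sqrt a with hqdef
  have hq0 : 0 < q := Real.sqrt_pos.mpr ha0
  have hq1 : q < 1 := by
    rw [hqdef, show (1:ℝ) = Real.sqrt 1 by simp]
    exact Real.sqrt_lt_sqrt ha0.le ha1
  have hq2 : q ^ (2:ℝ) = a := by
    rw [show (2:ℝ) = ((2:ℕ):ℝ) by norm_num, Real.rpow_natCast, Real.sq_sqrt ha0.le]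
  have azpow : ∀ n : ℤ, a ^ n = q ^ (2 * (n : ℝ)) := by
    intro n
    rw [← Real.rpow_intCast a n, ← hq2, ← Real.rpow_mul hq0.le]
  intro k
  induction k with
  | zero =>
      intro f _
      rw [dist_self]
      have e : (height (f 0) : ℝ) + (height (f 0) : ℝ) - ((0:ℕ) : ℝ)
          = 2 * (height (f 0) : ℝ) := by push_cast; ring
      rw [e]
      have := Real.rpow_pos_of_pos hq0 (2 * (height (f 0) : ℝ))
      nlinarith
  | succ k ih =>
      intro f hf
      have hrestrict : IsWalk τ k f := fun i hi => hf i (by omega)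
      have hIH := ih f hrestrict
      have hadj := hf k (by omega)
      obtain ⟨z, hz1, hz2⟩ := hadj.2.2
      have hedge : dist (pt (f k)) (pt (f (k+1))) ≤
          τ * a ^ (height (f k)) + τ * a ^ (height (f (k+1))) := by
        have := dist_triangle (pt (f k)) z (pt (f (k+1)))
        rw [dist_comm (pt (f k)) z] at this
        linarith
      set h0 := height (f 0)
      set hk := height (f k)
      set hw := height (f (k+1))
      have habs := abs_le.mp hadj.2.1
      have hH1 := abs_le.mp (walk_height hf k (by omega))
      have hH2 := abs_le.mp (walk_height hf (k+1) (by omega))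
      have htri := dist_triangle (pt (f 0)) (pt (f k)) (pt (f (k+1)))
      rw [azpow hk, azpow hw] at hedge
      set X : ℝ := (h0 : ℝ) + (hw : ℝ) - ((k:ℕ) + 1 : ℝ) with hX
      have hgoalX : (h0 : ℝ) + (hw : ℝ) - (((k+1):ℕ) : ℝ) = X := by push_cast [hX]; ring
      rw [hgoalX]
      have hPX : (0:ℝ) < q ^ X := Real.rpow_pos_of_pos hq0 _
      have hmono : q ^ (2 * (hw : ℝ)) ≤ q ^ X := by
        apply Real.rpow_le_rpow_of_exponent_ge hq0 hq1.le
        have hle : h0 - ((k:ℤ) + 1) ≤ hw := by push_cast at hH2; omega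
        have h' : (h0 : ℝ) - ((k:ℝ) + 1) ≤ (hw : ℝ) := by exact_mod_cast hle
        rw [hX]; linarith
      set B : ℝ := q ^ (2 * (hw : ℝ)) with hB
      have hBpos : 0 < B := Real.rpow_pos_of_pos hq0 _
      have hcases : hw = hk + 1 ∨ hw = hk ∨ hw = hk - 1 := by omega
      rcases hcases with hcase | hcase | hcase
      · -- ascending step
        have eE : (h0 : ℝ) + (hk : ℝ) - (k : ℝ) = X := by
          rw [hX, hcase]; push_cast; ring
        rw [eE] at hIH
        have e2 : B = q ^ (2 * (hk : ℝ)) * a := by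
          rw [hB, ← hq2, ← Real.rpow_add hq0, hcase]; push_cast; ring_nf
        set B' : ℝ := q ^ (2 * (hk : ℝ)) with hB'
        have hB'pos : 0 < B' := Real.rpow_pos_of_pos hq0 _
        rw [e2] at hedge ⊢
        have hDB : D * (1 - a) * B' = 2 * τ * B' := by rw [hD]
        have hint : 0 ≤ τ * (1 - a) * B' :=
          mul_nonneg (mul_nonneg hτ0.le (by linarith)) hB'pos.le
        nlinarith [htri, hIH, hedge, hDB, hint]
      · -- horizontal step
        have eE : (h0 : ℝ) + (hk : ℝ) - (k : ℝ) = X + 1 := by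
          rw [hX, hcase]; push_cast; ring
        rw [eE] at hIH
        have eq1 : q ^ (X + 1) = q ^ X * q := Real.rpow_add_one hq0.ne' X
        rw [eq1] at hIH
        have hkw : q ^ (2 * (hk : ℝ)) = B := by rw [hB, hcase]
        rw [hkw] at hIH hedge
        have key : 2 * τ * B ≤ 2 * τ * q ^ X :=
          mul_le_mul_of_nonneg_left hmono (by linarith)
        have key2 : 2 * τ * q ^ X ≤ C * (1 - q) * q ^ X :=
          mul_le_mul_of_nonneg_right hCq hPX.le
        nlinarith [htri, hIH, hedge, key, key2]
      · -- descending step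
        have eE : (h0 : ℝ) + (hk : ℝ) - (k : ℝ) = X + 2 := by
          rw [hX, hcase]; push_cast; ring
        rw [eE] at hIH
        have eq1 : q ^ (X + 2) = q ^ X * a := by
          rw [← hq2, Real.rpow_add hq0]
        rw [eq1] at hIH
        have e2 : q ^ (2 * (hk : ℝ)) = B * a := by
          rw [hB, ← hq2, ← Real.rpow_add hq0, hcase]; push_cast; ring_nf
        rw [e2] at hIH hedge
        have hDB : D * (1 - a) * B = 2 * τ * B := by rw [hD]
        have hcoef : (0:ℝ) ≤ 3 * τ + τ * a := by
          have := mul_nonneg hτ0.le ha0.le; linarith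
        have key : (3 * τ + τ * a) * B ≤ (3 * τ + τ * a) * q ^ X :=
          mul_le_mul_of_nonneg_left hmono hcoef
        have key2 : 4 * τ * q ^ X ≤ C * (1 - a) * q ^ X :=
          mul_le_mul_of_nonneg_right hCa hPX.le
        have key3 : 0 ≤ τ * (1 - a) * q ^ X :=
          mul_nonneg (mul_nonneg hτ0.le (by linarith)) hPX.le
        linarith [hDB, htri, hIH, hedge, key, key2, key3]


lemma graphDist_ge (ha0 : 0 < a) (ha1 : a < 1) (hτ : 3 < τ) {C D : ℝ}
    (hD : D * (1 - a) = 2 * τ)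
    (hCq : 2 * τ ≤ C * (1 - Real.sqrt a))
    (hCa : 4 * τ ≤ C * (1 - a))
    (hCD : D ≤ C) (hC1 : 1 ≤ C) (v w : F.Vertex) :
    (height v : ℝ) + height w - 2 * rho v w - 2 * Real.log C / (-Real.log a)
      ≤ (graphDist τ v w : ℝ) := by
  have hla : Real.log a < 0 := Real.log_neg ha0 ha1
  have hc2 : 0 ≤ 2 * Real.log C / (-Real.log a) :=
    div_nonneg (by nlinarith [Real.log_nonneg hC1]) (by linarith)
  -- a walk attaining the graph distance
  have hJ := (joined_and_le ha0 ha1 hτ v w).1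
  have hne : {k : ℕ | ∃ f : ℕ → F.Vertex, f 0 = v ∧ f k = w ∧ IsWalk τ k f}.Nonempty := by
    obtain ⟨k, f, h⟩ := hJ; exact ⟨k, f, h⟩
  have hmem : ∃ f : ℕ → F.Vertex, f 0 = v ∧ f (graphDist τ v w) = w ∧
      IsWalk τ (graphDist τ v w) f := Nat.sInf_mem hne
  obtain ⟨f, hf0, hfk, hwalk⟩ := hmem
  set k := graphDist τ v w with hkdef
  -- height bound
  have hH := abs_le.mp (walk_height hwalk k le_rfl)
  rw [hf0, hfk] at hH
  have hHR1 : (height v : ℝ) - height w ≤ (k : ℝ) := by exact_mod_cast hH.2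
  have hHR2 : (height w : ℝ) - height v ≤ (k : ℝ) := by
    have : -(k:ℤ) ≤ height v - height w := hH.1
    have : (height w : ℤ) - height v ≤ k := by omega
    exact_mod_cast this
  -- the two candidate lower bounds
  have hminbound : (height v : ℝ) + height w - 2 * (↑(min (height v) (height w)) : ℝ)
      ≤ (k : ℝ) := by
    rcases le_total (height v) (height w) with h | h
    · rw [min_eq_left h]; push_cast; linarith
    · rw [min_eq_right h]; push_cast; linarith
  have hlogbound : pt v ≠ pt w →
      (height v : ℝ) + height w
        - 2 * (Real.log (dist (pt v) (pt w)) / Real.log a)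
        - 2 * Real.log C / (-Real.log a) ≤ (k : ℝ) := by
    intro hp
    have hd0 : 0 < dist (pt v) (pt w) := dist_pos.mpr hp
    set q := Real.sqrt a with hqdef
    have hq0 : 0 < q := Real.sqrt_pos.mpr ha0
    have hdist : dist (pt v) (pt w) ≤
        C * q ^ ((height v : ℝ) + (height w : ℝ) - (k : ℝ)) := by
      have h1 := walk_dist ha0 ha1 hτ hD hCq hCa hCD k f hwalk
      rw [hf0, hfk] at h1
      have h2 : 0 < D * q ^ (2 * (height w : ℝ)) := by
        have hD0 : 0 < D := by nlinarith
        exact mul_pos hD0 (Real.rpow_pos_of_pos hq0 _)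
      linarith
    set E : ℝ := (height v : ℝ) + (height w : ℝ) - (k : ℝ) with hE
    have hC0 : (0:ℝ) < C := by linarith
    have hlog : Real.log (dist (pt v) (pt w)) ≤ Real.log C + E * (Real.log a / 2) := by
      have h2 := Real.log_le_log hd0 hdist
      rw [Real.log_mul hC0.ne' (Real.rpow_pos_of_pos hq0 E).ne',
        Real.log_rpow hq0, hqdef, Real.log_sqrt ha0.le] at h2
      linarith
    have hnum : 0 ≤ E * Real.log a - 2 * Real.log (dist (pt v) (pt w)) + 2 * Real.log C := by
      nlinarith [hlog]
    have hu : Real.log (dist (pt v) (pt w)) / Real.log a * Real.log a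
        = Real.log (dist (pt v) (pt w)) := div_mul_cancel₀ _ (ne_of_lt hla)
    have hc : 2 * Real.log C / (-Real.log a) * Real.log a = -(2 * Real.log C) := by
      have hla' : Real.log a ≠ 0 := ne_of_lt hla
      rw [div_mul_eq_mul_div, div_neg, mul_div_assoc, div_self hla', mul_one]
    have hfinal : E ≤ 2 * (Real.log (dist (pt v) (pt w)) / Real.log a)
        + 2 * Real.log C / (-Real.log a) := by
      nlinarith [hnum, hu, hc, hla]
    rw [hE] at hfinal
    linarith
  -- combine via the structure of rho
  unfold rho
  rcases min_cases ((↑(min (height v) (height w)) : ℝ))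
      (if pt v = pt w then (↑(min (height v) (height w)) : ℝ)
       else Real.log (dist (pt v) (pt w)) / Real.log a) with ⟨he, _⟩ | ⟨he, _⟩
  · rw [he]; linarith
  · rw [he]
    by_cases hp : pt v = pt w
    · rw [if_pos hp]; linarith
    · rw [if_neg hp]; linarith [hlogbound hp]

lemma rho_gromov (ha0 : 0 < a) (ha1 : a < 1) (x y z : F.Vertex) :
    min (rho x y) (rho y z) - (-(Real.log 2 / Real.log a)) ≤ rho x z := by
  have hla : Real.log a < 0 := Real.log_neg ha0 ha1
  have hc3 : 0 ≤ -(Real.log 2 / Real.log a) := by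
    have h2 : Real.log 2 / Real.log a ≤ 0 :=
      div_nonpos_of_nonneg_of_nonpos (Real.log_nonneg one_le_two) hla.le
    linarith
  have hdivle : ∀ u v : ℝ, u ≤ v → v / Real.log a ≤ u / Real.log a := by
    intro u v huv
    rw [div_eq_mul_inv, div_eq_mul_inv]
    exact mul_le_mul_of_nonpos_right huv (inv_nonpos.mpr hla.le)
  have hminle : min (rho x y) (rho y z) ≤ (↑(min (height x) (height z)) : ℝ) := by
    rw [Int.cast_min]
    exact le_min ((min_le_left _ _).trans (rho_le_fst x y))
      ((min_le_right _ _).trans (rho_le_snd y z))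
  by_cases h1 : pt x = pt z
  · have he : rho x z = (↑(min (height x) (height z)) : ℝ) := by
      unfold rho; rw [if_pos h1, min_self]
    rw [he]; linarith
  · have hρxz : rho x z = min ((↑(min (height x) (height z)) : ℝ))
        (Real.log (dist (pt x) (pt z)) / Real.log a) := by
      unfold rho; rw [if_neg h1]
    by_cases h2 : pt x = pt y
    · have hyz : pt y ≠ pt z := fun h => h1 (h2.trans h)
      have hdeq : dist (pt x) (pt z) = dist (pt y) (pt z) := by rw [h2]
      rw [hρxz, hdeq]
      refine le_min (by linarith) ?_
      have u1 : min (rho x y) (rho y z) ≤ rho y z := min_le_right _ _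
      have u2 := rho_le_log y z hyz
      linarith
    · by_cases h3 : pt y = pt z
      · have hdeq : dist (pt x) (pt z) = dist (pt x) (pt y) := by rw [h3]
        rw [hρxz, hdeq]
        refine le_min (by linarith) ?_
        have u1 : min (rho x y) (rho y z) ≤ rho x y := min_le_left _ _
        have u2 := rho_le_log x y h2
        linarith
      · have hdx : 0 < dist (pt x) (pt y) := dist_pos.mpr h2
        have hdz : 0 < dist (pt y) (pt z) := dist_pos.mpr h3
        have hdxz : 0 < dist (pt x) (pt z) := dist_pos.mpr h1
        have hL : min (Real.log (dist (pt x) (pt y)) / Real.log a)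
              (Real.log (dist (pt y) (pt z)) / Real.log a)
              - (-(Real.log 2 / Real.log a))
            ≤ Real.log (dist (pt x) (pt z)) / Real.log a := by
          rcases le_total (dist (pt x) (pt y)) (dist (pt y) (pt z)) with hcmp | hcmp
          · have htri : dist (pt x) (pt z) ≤ 2 * dist (pt y) (pt z) := by
              have := dist_triangle (pt x) (pt y) (pt z); linarith
            have hlog : Real.log (dist (pt x) (pt z))
                ≤ Real.log 2 + Real.log (dist (pt y) (pt z)) := by
              have := Real.log_le_log hdxz htri
              rwa [Real.log_mul two_ne_zero hdz.ne'] at this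
            have q1 := hdivle _ _ hlog
            rw [add_div] at q1
            linarith [min_le_right (Real.log (dist (pt x) (pt y)) / Real.log a)
              (Real.log (dist (pt y) (pt z)) / Real.log a)]
          · have htri : dist (pt x) (pt z) ≤ 2 * dist (pt x) (pt y) := by
              have := dist_triangle (pt x) (pt y) (pt z); linarith
            have hlog : Real.log (dist (pt x) (pt z))
                ≤ Real.log 2 + Real.log (dist (pt x) (pt y)) := by
              have := Real.log_le_log hdxz htri
              rwa [Real.log_mul two_ne_zero hdx.ne'] at this
            have q1 := hdivle _ _ hlog
            rw [add_div] at q1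
            linarith [min_le_left (Real.log (dist (pt x) (pt y)) / Real.log a)
              (Real.log (dist (pt y) (pt z)) / Real.log a)]
        rw [hρxz]
        refine le_min (by linarith) ?_
        have u1 : min (rho x y) (rho y z)
            ≤ Real.log (dist (pt x) (pt y)) / Real.log a :=
          (min_le_left _ _).trans (rho_le_log x y h2)
        have u2 : min (rho x y) (rho y z)
            ≤ Real.log (dist (pt y) (pt z)) / Real.log a :=
          (min_le_right _ _).trans (rho_le_log y z h3)
        have := le_min u1 u2
        linarith

lemma four_point {p q r s t u c : ℝ}
    (h1 : min p q - c ≤ t) (h2 : min s r - c ≤ t)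
    (h3 : min p s - c ≤ u) (h4 : min q r - c ≤ u) :
    min (p + r) (q + s) - 2 * c ≤ t + u := by
  have m1 := min_le_left (p + r) (q + s)
  have m2 := min_le_right (p + r) (q + s)
  rcases min_cases p q with ⟨e1, o1⟩ | ⟨e1, o1⟩ <;>
    rcases min_cases s r with ⟨e2, o2⟩ | ⟨e2, o2⟩ <;>
    rcases min_cases p s with ⟨e3, o3⟩ | ⟨e3, o3⟩ <;>
    rcases min_cases q r with ⟨e4, o4⟩ | ⟨e4, o4⟩ <;>
    rw [e1] at h1 <;> rw [e2] at h2 <;> rw [e3] at h3 <;> rw [e4] at h4 <;>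
    linarith

end HypAux

/-- Theorem: the hyperbolic filling graph is connected and Gromov hyperbolic, with
hyperbolicity constant depending only on `a` and `τ`. -/
theorem statement1 (a τ : ℝ) (ha0 : 0 < a) (ha1 : a < 1)
    (hτ : max 3 (1 / (1 - a)) < τ) :
    ∃ δ : ℝ, 0 ≤ δ ∧
      ∀ (Z : Type) [MetricSpace Z] (F : HypFilling Z a),
        (∀ v w : F.Vertex, HypFilling.Joined τ v w) ∧
        ∀ o x y z : F.Vertex,
          HypFilling.gpGraph τ o x z ≥
            min (HypFilling.gpGraph τ o x y) (HypFilling.gpGraph τ o y z) - δ := by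
  have hτ3 : 3 < τ := lt_of_le_of_lt (le_max_left _ _) hτ
  have hτ0 : (0:ℝ) < τ := by linarith
  have h1a : (0:ℝ) < 1 - a := by linarith
  set q := Real.sqrt a with hqdef
  have hq0 : 0 < q := Real.sqrt_pos.mpr ha0
  have hq1 : q < 1 := by
    rw [hqdef, show (1:ℝ) = Real.sqrt 1 by simp]
    exact Real.sqrt_lt_sqrt ha0.le ha1
  have h1q : (0:ℝ) < 1 - q := by linarith
  set D : ℝ := 2 * τ / (1 - a) with hDdef
  set C : ℝ := 6 * τ / (1 - a) + 2 * τ / (1 - q) with hCdef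
  have hD : D * (1 - a) = 2 * τ := div_mul_cancel₀ _ h1a.ne'
  have hCq : 2 * τ ≤ C * (1 - q) := by
    have e0 : (2 * τ / (1 - q)) * (1 - q) = 2 * τ := div_mul_cancel₀ _ h1q.ne'
    have e2 : 0 ≤ (6 * τ / (1 - a)) * (1 - q) :=
      mul_nonneg (div_nonneg (by linarith) h1a.le) h1q.le
    rw [hCdef]
    nlinarith [e0, e2]
  have hCa : 4 * τ ≤ C * (1 - a) := by
    have e0 : (6 * τ / (1 - a)) * (1 - a) = 6 * τ := div_mul_cancel₀ _ h1a.ne'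
    have e2 : 0 ≤ (2 * τ / (1 - q)) * (1 - a) :=
      mul_nonneg (div_nonneg (by linarith) h1q.le) h1a.le
    rw [hCdef]
    nlinarith [e0, e2]
  have hCD : D ≤ C := by
    have e1 : 0 ≤ 2 * τ / (1 - q) := div_nonneg (by linarith) h1q.le
    have h2 : 2 * τ / (1 - a) ≤ 6 * τ / (1 - a) :=
      (div_le_div_iff_of_pos_right h1a).mpr (by linarith)
    rw [hDdef, hCdef]; linarith
  have hC1 : 1 ≤ C := by
    have h2 : 2 * τ ≤ 2 * τ / (1 - q) := by
      rw [le_div_iff₀ h1q]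
      nlinarith [mul_nonneg hτ0.le hq0.le]
    have h3 : 0 ≤ 6 * τ / (1 - a) := div_nonneg (by linarith) h1a.le
    rw [hCdef]; linarith
  have hla : Real.log a < 0 := Real.log_neg ha0 ha1
  set c2 : ℝ := 2 * Real.log C / (-Real.log a) with hc2def
  have hc20 : 0 ≤ c2 := div_nonneg (by nlinarith [Real.log_nonneg hC1]) (by linarith)
  set c3 : ℝ := -(Real.log 2 / Real.log a) with hc3def
  have hc30 : 0 ≤ c3 := by
    have := div_nonpos_of_nonneg_of_nonpos (Real.log_nonneg one_le_two) hla.le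
    rw [hc3def]; linarith
  set K : ℝ := max 3 c2 with hKdef
  have hK3 : (3:ℝ) ≤ K := le_max_left _ _
  have hKc2 : c2 ≤ K := le_max_right _ _
  rw [hqdef] at hCq
  clear_value D C c2 c3 K
  refine ⟨3 * K + 2 * c3, by linarith, ?_⟩
  intro Z _ F
  constructor
  · intro v w
    exact (HypAux.joined_and_le ha0 ha1 hτ3 v w).1
  · intro o x y z
    have uxo := (HypAux.joined_and_le (τ := τ) ha0 ha1 hτ3 x o).2
    have uyo := (HypAux.joined_and_le (τ := τ) ha0 ha1 hτ3 y o).2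
    have uzo := (HypAux.joined_and_le (τ := τ) ha0 ha1 hτ3 z o).2
    have uxy := (HypAux.joined_and_le (τ := τ) ha0 ha1 hτ3 x y).2
    have uyz := (HypAux.joined_and_le (τ := τ) ha0 ha1 hτ3 y z).2
    have uxz := (HypAux.joined_and_le (τ := τ) ha0 ha1 hτ3 x z).2
    have lxo := HypAux.graphDist_ge (τ := τ) ha0 ha1 hτ3 hD hCq hCa hCD hC1 x o
    have lyo := HypAux.graphDist_ge (τ := τ) ha0 ha1 hτ3 hD hCq hCa hCD hC1 y o
    have lzo := HypAux.graphDist_ge (τ := τ) ha0 ha1 hτ3 hD hCq hCa hCD hC1 z o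
    have lxy := HypAux.graphDist_ge (τ := τ) ha0 ha1 hτ3 hD hCq hCa hCD hC1 x y
    have lyz := HypAux.graphDist_ge (τ := τ) ha0 ha1 hτ3 hD hCq hCa hCD hC1 y z
    have lxz := HypAux.graphDist_ge (τ := τ) ha0 ha1 hτ3 hD hCq hCa hCD hC1 x z
    rw [← hc2def] at lxo lyo lzo lxy lyz lxz
    have g1 := HypAux.rho_gromov (F := F) ha0 ha1 x y z
    have g2 := HypAux.rho_gromov (F := F) ha0 ha1 x o z
    have g3 := HypAux.rho_gromov (F := F) ha0 ha1 y x o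
    have g4 := HypAux.rho_gromov (F := F) ha0 ha1 y z o
    rw [← hc3def] at g1 g2 g3 g4
    rw [HypAux.rho_symm o z] at g2
    rw [HypAux.rho_symm y x] at g3
    have hfp := HypAux.four_point g1 g2 g3 g4
    simp only [HypFilling.gpGraph, ge_iff_le]
    have m1 := min_le_left
      (((HypFilling.graphDist τ x o : ℝ) + (HypFilling.graphDist τ y o : ℝ)
        - (HypFilling.graphDist τ x y : ℝ)) / 2)
      (((HypFilling.graphDist τ y o : ℝ) + (HypFilling.graphDist τ z o : ℝ)
        - (HypFilling.graphDist τ y z : ℝ)) / 2)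
    have m2 := min_le_right
      (((HypFilling.graphDist τ x o : ℝ) + (HypFilling.graphDist τ y o : ℝ)
        - (HypFilling.graphDist τ x y : ℝ)) / 2)
      (((HypFilling.graphDist τ y o : ℝ) + (HypFilling.graphDist τ z o : ℝ)
        - (HypFilling.graphDist τ y z : ℝ)) / 2)
    have Uxy : ((HypFilling.graphDist τ x o : ℝ) + (HypFilling.graphDist τ y o : ℝ)
          - (HypFilling.graphDist τ x y : ℝ)) / 2
        ≤ (HypFilling.height o : ℝ) - HypAux.rho x o - HypAux.rho y o
          + HypAux.rho x y + 3 + c2 / 2 := by linarith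
    have Uyz : ((HypFilling.graphDist τ y o : ℝ) + (HypFilling.graphDist τ z o : ℝ)
          - (HypFilling.graphDist τ y z : ℝ)) / 2
        ≤ (HypFilling.height o : ℝ) - HypAux.rho y o - HypAux.rho z o
          + HypAux.rho y z + 3 + c2 / 2 := by linarith
    have Lxz : (HypFilling.height o : ℝ) - HypAux.rho x o - HypAux.rho z o
          + HypAux.rho x z - c2 - 3 / 2
        ≤ ((HypFilling.graphDist τ x o : ℝ) + (HypFilling.graphDist τ z o : ℝ)
          - (HypFilling.graphDist τ x z : ℝ)) / 2 := by linarith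
    have tst : (((HypFilling.graphDist τ x o : ℝ) + (HypFilling.graphDist τ y o : ℝ)
          - (HypFilling.graphDist τ x y : ℝ)) / 2) ⊓
        (((HypFilling.graphDist τ y o : ℝ) + (HypFilling.graphDist τ z o : ℝ)
          - (HypFilling.graphDist τ y z : ℝ)) / 2)
        ≤ (HypFilling.height o : ℝ) - HypAux.rho x o - HypAux.rho y o
          + HypAux.rho x y + 3 + c2 / 2 := by linarith only [m1, Uxy]
    rcases min_cases (HypAux.rho x y + HypAux.rho z o) (HypAux.rho y z + HypAux.rho x o)
      with ⟨e5, _⟩ | ⟨e5, _⟩ <;> rw [e5] at hfp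
    · linarith only [tst, Lxz, hfp, hK3, hKc2]
    · linarith only [m2, Uyz, Lxz, hfp, hK3, hKc2]
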